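/- For every natural number n ≥ 1, the identity 6 · 2^{n−1} · Π_{k=0}^{n−2} (2^{2n−k} − 2^k) = (2^n − 1) · 2^n · (Π_{k=1}^{n} (2^k + 1)) · (Π_{k=0}^{n−2} (2^{n−1} − 2^k)) holds (with empty products equal to 1). (Consequently the number of n-to-1-qubit stabilizer reductions, 2^{n−1} · Π_{k=0}^{n−2}(2^{2n−k} − 2^k) / Π_{k=0}^{n−2}(2^{n−1} − 2^k), equals (1/6)(2^n − 1)·N where N = 2^n · Π_{k=1}^{n}(2^k+1) is the number of n-qubit stabilizer states.) -/

import Mathlib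

open Finset

lemma aux (m : ℕ) :
    6 * 2 ^ m * ∏ k ∈ range m, (2 ^ (2 * (m + 1) - k) - 2 ^ k) =
      (2 ^ (m + 1) - 1) * 2 ^ (m + 1) * (∏ k ∈ Icc 1 (m + 1), (2 ^ k + 1)) *
        ∏ k ∈ range m, (2 ^ m - 2 ^ k) := by
  -- factor left product
  have hL : ∏ k ∈ range m, (2 ^ (2 * (m + 1) - k) - 2 ^ k)
      = ∏ k ∈ range m, (2 ^ k * ((2 ^ (m + 1 - k) - 1) * (2 ^ (m + 1 - k) + 1))) := by
    refine prod_congr rfl fun k hk => ?_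
    rw [mem_range] at hk
    have h2 : (1:ℕ) ≤ 2 ^ (m + 1 - k) := Nat.one_le_two_pow
    have h1 : (2:ℕ) ^ k ≤ 2 ^ (2 * (m + 1) - k) := Nat.pow_le_pow_right (by norm_num) (by omega)
    have e : 2 * (m + 1) - k = k + ((m + 1 - k) + (m + 1 - k)) := by omega
    zify [h1, h2]
    rw [e, pow_add, pow_add]
    ring
  have hR : ∏ k ∈ range m, (2 ^ m - 2 ^ k)
      = ∏ k ∈ range m, (2 ^ k * (2 ^ (m - k) - 1)) := by
    refine prod_congr rfl fun k hk => ?_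
    rw [mem_range] at hk
    have h2 : (1:ℕ) ≤ 2 ^ (m - k) := Nat.one_le_two_pow
    have h1 : (2:ℕ) ^ k ≤ 2 ^ m := Nat.pow_le_pow_right (by norm_num) (by omega)
    zify [h1, h2]
    have e : (2:ℤ) ^ m = 2 ^ k * 2 ^ (m - k) := by
      rw [← pow_add]; congr 1; omega
    rw [e]; ring
  rw [hL, hR]
  rw [prod_mul_distrib, prod_mul_distrib, prod_mul_distrib]
  -- reindex
  have r1 : ∏ k ∈ range m, (2 ^ (m + 1 - k) - 1) = ∏ k ∈ range m, (2 ^ (k + 2) - 1) := by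
    rw [← Finset.prod_range_reflect]
    exact prod_congr rfl fun j hj => by rw [mem_range] at hj; congr 2; omega
  have r2 : ∏ k ∈ range m, (2 ^ (m + 1 - k) + 1) = ∏ k ∈ range m, (2 ^ (k + 2) + 1) := by
    rw [← Finset.prod_range_reflect]
    exact prod_congr rfl fun j hj => by rw [mem_range] at hj; congr 2; omega
  have r3 : ∏ k ∈ range m, (2 ^ (m - k) - 1) = ∏ k ∈ range m, (2 ^ (k + 1) - 1) := by
    rw [← Finset.prod_range_reflect]
    exact prod_congr rfl fun j hj => by rw [mem_range] at hj; congr 2; omega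
  rw [r1, r2, r3]
  -- Icc product
  have hIcc : ∏ k ∈ Icc 1 (m + 1), (2 ^ k + 1) = 3 * ∏ k ∈ range m, (2 ^ (k + 2) + 1) := by
    have : Icc 1 (m + 1) = Ico 1 (m + 2) := by rw [show m + 2 = m + 1 + 1 from rfl, Finset.Ico_add_one_right_eq_Icc]
    rw [this, Finset.prod_Ico_eq_prod_range]
    simp only [Nat.add_sub_cancel, show m + 2 - 1 = m + 1 from rfl]
    rw [Finset.prod_range_succ']
    have : ∀ k, (2:ℕ) ^ (1 + (k + 1)) + 1 = 2 ^ (k + 2) + 1 := fun k => by ring_nf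
    rw [prod_congr rfl fun k _ => this k]
    norm_num [mul_comm]
  -- relate minus products
  have hA : ∏ k ∈ range m, (2 ^ (k + 2) - 1)
      = (2 ^ (m + 1) - 1) * ∏ k ∈ range m, (2 ^ (k + 1) - 1) := by
    have h1 := Finset.prod_range_succ (fun k => (2:ℕ) ^ (k + 1) - 1) m
    have h2 := Finset.prod_range_succ' (fun k => (2:ℕ) ^ (k + 1) - 1) m
    calc ∏ k ∈ range m, (2 ^ (k + 2) - 1)
        = (∏ k ∈ range m, (2 ^ (k + 1 + 1) - 1)) * (2 ^ (0 + 1) - 1) := by norm_num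
      _ = ∏ k ∈ range (m + 1), (2 ^ (k + 1) - 1) := (h2).symm
      _ = (∏ k ∈ range m, (2 ^ (k + 1) - 1)) * (2 ^ (m + 1) - 1) := h1
      _ = (2 ^ (m + 1) - 1) * ∏ k ∈ range m, (2 ^ (k + 1) - 1) := mul_comm _ _
  rw [hIcc, hA, pow_succ]
  ring

theorem stmt_9 (n : ℕ) (hn : 1 ≤ n) :
    6 * 2 ^ (n - 1) * ∏ k ∈ Finset.range (n - 1), (2 ^ (2 * n - k) - 2 ^ k) =
      (2 ^ n - 1) * 2 ^ n * (∏ k ∈ Finset.Icc 1 n, (2 ^ k + 1)) *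
        ∏ k ∈ Finset.range (n - 1), (2 ^ (n - 1) - 2 ^ k) := by
  obtain ⟨m, rfl⟩ : ∃ m, n = m + 1 := ⟨n - 1, by omega⟩
  simpa using aux m
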